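/- If (Xₙ) is the birth-death chain in environment ω started at 0, a, b ≥ 1 are integers, y > 0, and the potential V satisfies V(i) ≤ y - c for all 0 ≤ i ≤ a-1 and max_{-b ≤ i ≤ -1} V(i) ≥ y, then the probability that the chain hits -b before a is at most a·exp(-c). -/

import Mathlib

open MeasureTheory Set

noncomputable section

/-- The potential associated to an environment `ω : ℤ → ℝ`. -/
def pot (ω : ℤ → ℝ) (i : ℤ) : ℝ :=
  if 0 ≤ i then ∑ k ∈ Finset.Icc (1:ℤ) i, Real.log ((1 - ω k) / ω k)
  else -∑ k ∈ Finset.Icc (i + 1) (0:ℤ), Real.log ((1 - ω k) / ω k)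

end

namespace Stmt1Aux

open scoped Classical

def step (s : Bool) : ℤ := if s then 1 else -1

def pathF (z : ℤ) (σ : ℕ → Bool) : ℕ → ℤ
  | 0 => z
  | n+1 => pathF z σ n + step (σ n)

lemma pathF_zero (z : ℤ) (σ : ℕ → Bool) : pathF z σ 0 = z := rfl

lemma pathF_succ (z : ℤ) (σ : ℕ → Bool) (n : ℕ) :
    pathF z σ (n+1) = pathF z σ n + step (σ n) := rfl

lemma pathF_shift (z : ℤ) (σ : ℕ → Bool) (n : ℕ) :
    pathF z σ (n+1) = pathF (z + step (σ 0)) (σ ∘ Nat.succ) n := by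
  induction n with
  | zero => rfl
  | succ n ih => rw [pathF_succ, ih, pathF_succ]; rfl

noncomputable def wgt (ω : ℤ → ℝ) (z : ℤ) (N : ℕ) (σ : ℕ → Bool) : ℝ :=
  ∏ i ∈ Finset.range N, (if σ i then ω (pathF z σ i) else 1 - ω (pathF z σ i))

lemma wgt_zero (ω : ℤ → ℝ) (z : ℤ) (σ : ℕ → Bool) : wgt ω z 0 σ = 1 := by
  simp [wgt]

lemma wgt_shift (ω : ℤ → ℝ) (z : ℤ) (N : ℕ) (σ : ℕ → Bool) :
    wgt ω z (N+1) σ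
      = (if σ 0 then ω z else 1 - ω z) * wgt ω (z + step (σ 0)) N (σ ∘ Nat.succ) := by
  rw [wgt, Finset.prod_range_succ']
  rw [mul_comm]
  congr 1
  · rw [wgt]
    apply Finset.prod_congr rfl
    intro i _
    rw [← pathF_shift]
    rfl

lemma wgt_nonneg (ω : ℤ → ℝ) (hω : ∀ x : ℤ, 0 < ω x ∧ ω x < 1) (z : ℤ) (N : ℕ)
    (σ : ℕ → Bool) : 0 ≤ wgt ω z N σ := by
  apply Finset.prod_nonneg
  intro i _
  split
  · exact (hω _).1.le
  · linarith [(hω (pathF z σ i)).2]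

def extF (N : ℕ) (σ : Fin N → Bool) : ℕ → Bool :=
  fun i => if h : i < N then σ ⟨i, h⟩ else false

lemma extF_cons_zero (N : ℕ) (b : Bool) (t : Fin N → Bool) :
    extF (N+1) (Fin.cons b t) 0 = b := by
  simp [extF]

lemma extF_cons_succ (N : ℕ) (b : Bool) (t : Fin N → Bool) :
    (extF (N+1) (Fin.cons b t)) ∘ Nat.succ = extF N t := by
  funext i
  by_cases h : i < N
  · have h' : i + 1 < N + 1 := by omega
    simp only [Function.comp, extF, Nat.succ_eq_add_one, dif_pos h', dif_pos h]
    exact @Fin.cons_succ N (fun _ => Bool) b t ⟨i, h⟩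
  · have h' : ¬ (i + 1 < N + 1) := by omega
    simp only [Function.comp, extF, Nat.succ_eq_add_one, dif_neg h', dif_neg h]

def Hit (bb aa z : ℤ) (N : ℕ) (σ : ℕ → Bool) : Prop :=
  ∃ n ≤ N, pathF z σ n = bb ∧ ∀ m ≤ n, pathF z σ m ≠ aa

lemma hit_shift (bb aa z : ℤ) (N : ℕ) (σ : ℕ → Bool) (hzb : z ≠ bb) (hza : z ≠ aa) :
    Hit bb aa z (N+1) σ ↔ Hit bb aa (z + step (σ 0)) N (σ ∘ Nat.succ) := by
  constructor
  · rintro ⟨n, hn, hnb, hna⟩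
    rcases n with _ | n
    · exact absurd hnb hzb
    · refine ⟨n, by omega, ?_, ?_⟩
      · rw [← pathF_shift]; exact hnb
      · intro m hm
        rw [← pathF_shift]
        exact hna (m+1) (by omega)
  · rintro ⟨n, hn, hnb, hna⟩
    refine ⟨n+1, by omega, ?_, ?_⟩
    · rw [pathF_shift]; exact hnb
    · intro m hm
      rcases m with _ | m
      · exact hza
      · rw [pathF_shift]
        exact hna m (by omega)

noncomputable def WS (ω : ℤ → ℝ) (N : ℕ) (z : ℤ) : ℝ :=
  ∑ σ : Fin N → Bool, wgt ω z N (extF N σ)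

noncomputable def HS (ω : ℤ → ℝ) (bb aa : ℤ) (N : ℕ) (z : ℤ) : ℝ :=
  ∑ σ : Fin N → Bool,
    if Hit bb aa z N (extF N σ) then wgt ω z N (extF N σ) else 0

lemma sum_split (N : ℕ) (F : (ℕ → Bool) → ℝ) :
    ∑ σ : Fin (N+1) → Bool, F (extF (N+1) σ)
      = (∑ τ : Fin N → Bool, F (extF (N+1) (Fin.cons true τ)))
        + ∑ τ : Fin N → Bool, F (extF (N+1) (Fin.cons false τ)) := by
  rw [← (Fin.consEquiv (fun _ : Fin (N+1) => Bool)).sum_comp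
      (fun σ => F (extF (N+1) σ))]
  rw [Fintype.sum_prod_type]
  rw [Fintype.sum_bool]
  rfl

lemma WS_eq_one (ω : ℤ → ℝ) (N : ℕ) : ∀ z : ℤ, WS ω N z = 1 := by
  induction N with
  | zero =>
      intro z
      simp [WS, wgt_zero]
  | succ N ih =>
      intro z
      rw [WS, sum_split]
      have ht : ∀ τ : Fin N → Bool,
          wgt ω z (N+1) (extF (N+1) (Fin.cons true τ))
            = ω z * wgt ω (z+1) N (extF N τ) := by
        intro τ
        rw [wgt_shift, extF_cons_zero, extF_cons_succ]
        simp [step]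
      have hf : ∀ τ : Fin N → Bool,
          wgt ω z (N+1) (extF (N+1) (Fin.cons false τ))
            = (1 - ω z) * wgt ω (z-1) N (extF N τ) := by
        intro τ
        rw [wgt_shift, extF_cons_zero, extF_cons_succ]
        simp [step, sub_eq_add_neg]
      simp only [ht, hf, ← Finset.mul_sum]
      have h1 : ∑ τ : Fin N → Bool, wgt ω (z+1) N (extF N τ) = 1 := ih (z+1)
      have h2 : ∑ τ : Fin N → Bool, wgt ω (z-1) N (extF N τ) = 1 := ih (z-1)
      rw [h1, h2]
      ring



noncomputable section
lemma Icc_insert (u v : ℤ) (h : u ≤ v) :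
    Finset.Icc u v = insert u (Finset.Icc (u+1) v) := by
  ext x
  simp only [Finset.mem_Icc, Finset.mem_insert]
  omega

lemma pot_step (ω : ℤ → ℝ) (z : ℤ) :
    pot ω z = pot ω (z-1) + Real.log ((1 - ω z) / ω z) := by
  rcases lt_trichotomy z 0 with hz | hz | hz
  · have h1 : ¬ (0 ≤ z) := by omega
    have h2 : ¬ (0 ≤ z - 1) := by omega
    rw [pot, pot, if_neg h1, if_neg h2]
    have h3 : z - 1 + 1 = z := by ring
    rw [h3, Icc_insert z 0 (by omega), Finset.sum_insert (by simp)]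
    ring
  · subst hz
    have h2 : ¬ ((0:ℤ) ≤ 0 - 1) := by omega
    rw [pot, pot, if_pos le_rfl, if_neg h2]
    have h3 : (0:ℤ) - 1 + 1 = 0 := by ring
    rw [h3]
    have h4 : Finset.Icc (1:ℤ) 0 = ∅ := Finset.Icc_eq_empty (by omega)
    rw [h4, Finset.Icc_self, Finset.sum_singleton, Finset.sum_empty]
    ring
  · have h1 : (0:ℤ) ≤ z := by omega
    have h2 : (0:ℤ) ≤ z - 1 := by omega
    rw [pot, pot, if_pos h1, if_pos h2]
    have h3 : Finset.Icc (1:ℤ) z = insert z (Finset.Icc 1 (z-1)) := by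
      ext x
      simp only [Finset.mem_Icc, Finset.mem_insert]
      omega
    rw [h3, Finset.sum_insert (by simp)]
    ring

lemma exp_pot_step (ω : ℤ → ℝ) (hω : ∀ x : ℤ, 0 < ω x ∧ ω x < 1) (z : ℤ) :
    ω z * Real.exp (pot ω z) = (1 - ω z) * Real.exp (pot ω (z-1)) := by
  have h1 : (0:ℝ) < (1 - ω z) / ω z :=
    div_pos (by linarith [(hω z).2]) (hω z).1
  rw [pot_step, Real.exp_add, Real.exp_log h1]
  have hne : ω z ≠ 0 := ne_of_gt (hω z).1
  field_simp

def hfun (ω : ℤ → ℝ) (bb aa z : ℤ) : ℝ :=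
  (∑ i ∈ Finset.Icc z (aa-1), Real.exp (pot ω i))
    / (∑ i ∈ Finset.Icc bb (aa-1), Real.exp (pot ω i))

variable {ω : ℤ → ℝ} {bb aa : ℤ}

lemma Z_pos (hba : bb < aa) :
    0 < ∑ i ∈ Finset.Icc bb (aa-1), Real.exp (pot ω i) :=
  Finset.sum_pos (fun i _ => Real.exp_pos _)
    (Finset.nonempty_Icc.mpr (by omega))

lemma hfun_nonneg (z : ℤ) : 0 ≤ hfun ω bb aa z := by
  apply div_nonneg
  · exact Finset.sum_nonneg fun i _ => (Real.exp_pos _).le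
  · exact Finset.sum_nonneg fun i _ => (Real.exp_pos _).le

lemma hfun_bb (hba : bb < aa) : hfun ω bb aa bb = 1 :=
  div_self (ne_of_gt (Z_pos hba))

lemma hfun_aa : hfun ω bb aa aa = 0 := by
  rw [hfun, Finset.Icc_eq_empty (by omega), Finset.sum_empty, zero_div]

lemma S_insert (z : ℤ) (hz : z ≤ aa - 1) :
    ∑ i ∈ Finset.Icc z (aa-1), Real.exp (pot ω i)
      = Real.exp (pot ω z) + ∑ i ∈ Finset.Icc (z+1) (aa-1), Real.exp (pot ω i) := by
  rw [Icc_insert z (aa-1) hz, Finset.sum_insert (by simp)]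

lemma hfun_harmonic (hω : ∀ x : ℤ, 0 < ω x ∧ ω x < 1) (z : ℤ)
    (h1 : bb < z) (h2 : z < aa) :
    ω z * hfun ω bb aa (z+1) + (1 - ω z) * hfun ω bb aa (z-1) = hfun ω bb aa z := by
  have hZ : (∑ i ∈ Finset.Icc bb (aa-1), Real.exp (pot ω i)) ≠ 0 :=
    ne_of_gt (Z_pos (by omega))
  have e1 := S_insert (ω := ω) (aa := aa) (z-1) (by omega)
  rw [sub_add_cancel] at e1
  have e2 := S_insert (ω := ω) (aa := aa) z (by omega)
  have e3 := exp_pot_step ω hω z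
  have key : ω z * (∑ i ∈ Finset.Icc (z+1) (aa-1), Real.exp (pot ω i))
      + (1 - ω z) * (∑ i ∈ Finset.Icc (z-1) (aa-1), Real.exp (pot ω i))
      = ∑ i ∈ Finset.Icc z (aa-1), Real.exp (pot ω i) := by
    linear_combination (1 - ω z) * e1 - ω z * e2 - e3
  rw [hfun, hfun, hfun, ← key]
  ring

end


noncomputable section
variable {ω : ℤ → ℝ} {bb aa : ℤ}

lemma HS_le_WS (hω : ∀ x : ℤ, 0 < ω x ∧ ω x < 1) (N : ℕ) (z : ℤ) :
    HS ω bb aa N z ≤ WS ω N z := by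
  apply Finset.sum_le_sum
  intro σ _
  split
  · exact le_rfl
  · exact wgt_nonneg ω hω z N _

lemma HS_le_hfun (hω : ∀ x : ℤ, 0 < ω x ∧ ω x < 1) (hba : bb < aa) :
    ∀ N : ℕ, ∀ z : ℤ, bb ≤ z → z ≤ aa → HS ω bb aa N z ≤ hfun ω bb aa z := by
  intro N
  induction N with
  | zero =>
      intro z hz1 hz2
      by_cases hzb : z = bb
      · rw [hzb]
        calc HS ω bb aa 0 bb ≤ WS ω 0 bb := HS_le_WS hω 0 bb
        _ = 1 := WS_eq_one ω 0 bb
        _ = hfun ω bb aa bb := (hfun_bb hba).symm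
      · have : HS ω bb aa 0 z = 0 := by
          apply Finset.sum_eq_zero
          intro σ _
          rw [if_neg]
          rintro ⟨n, hn, hnb, -⟩
          interval_cases n
          exact hzb hnb
        rw [this]
        exact hfun_nonneg z
  | succ N ih =>
      intro z hz1 hz2
      by_cases hzb : z = bb
      · rw [hzb]
        calc HS ω bb aa (N+1) bb ≤ WS ω (N+1) bb := HS_le_WS hω (N+1) bb
        _ = 1 := WS_eq_one ω (N+1) bb
        _ = hfun ω bb aa bb := (hfun_bb hba).symm
      · by_cases hza : z = aa
        · rw [hza]
          have : HS ω bb aa (N+1) aa = 0 := by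
            apply Finset.sum_eq_zero
            intro σ _
            rw [if_neg]
            rintro ⟨n, hn, hnb, hna⟩
            exact hna 0 (Nat.zero_le n) rfl
          rw [this]
          exact hfun_nonneg aa
        · have ht : ∀ τ : Fin N → Bool,
              (if Hit bb aa z (N+1) (extF (N+1) (Fin.cons true τ))
                then wgt ω z (N+1) (extF (N+1) (Fin.cons true τ)) else 0)
              = ω z * (if Hit bb aa (z+1) N (extF N τ)
                  then wgt ω (z+1) N (extF N τ) else 0) := by
            intro τ
            rw [wgt_shift, hit_shift bb aa z N _ hzb hza, extF_cons_zero, extF_cons_succ]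
            simp [step]
          have hf : ∀ τ : Fin N → Bool,
              (if Hit bb aa z (N+1) (extF (N+1) (Fin.cons false τ))
                then wgt ω z (N+1) (extF (N+1) (Fin.cons false τ)) else 0)
              = (1 - ω z) * (if Hit bb aa (z-1) N (extF N τ)
                  then wgt ω (z-1) N (extF N τ) else 0) := by
            intro τ
            rw [wgt_shift, hit_shift bb aa z N _ hzb hza, extF_cons_zero, extF_cons_succ]
            have : z + step false = z - 1 := by simp [step]; ring
            rw [this]
            simp [step]
          have hsplit : HS ω bb aa (N+1) z
              = ω z * HS ω bb aa N (z+1) + (1 - ω z) * HS ω bb aa N (z-1) := by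
            rw [HS, sum_split N
              (fun s => if Hit bb aa z (N+1) s then wgt ω z (N+1) s else 0)]
            simp only [ht, hf, ← Finset.mul_sum]
            rfl
          rw [hsplit]
          have h1 : HS ω bb aa N (z+1) ≤ hfun ω bb aa (z+1) :=
            ih (z+1) (by omega) (by omega)
          have h2 : HS ω bb aa N (z-1) ≤ hfun ω bb aa (z-1) :=
            ih (z-1) (by omega) (by omega)
          have hw := hfun_harmonic (bb := bb) (aa := aa) hω z (by omega) (by omega)
          have p1 : 0 ≤ ω z := (hω z).1.le
          have p2 : 0 ≤ 1 - ω z := by linarith [(hω z).2]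
          rw [← hw]
          exact add_le_add (mul_le_mul_of_nonneg_left h1 p1)
            (mul_le_mul_of_nonneg_left h2 p2)

lemma hfun_le (hω : ∀ x : ℤ, 0 < ω x ∧ ω x < 1) (a b : ℤ) (ha : 1 ≤ a) (hb : 1 ≤ b)
    (y c : ℝ)
    (hupper : ∀ i : ℤ, 0 ≤ i → i ≤ a - 1 → pot ω i ≤ y - c)
    (hmax : ∃ i : ℤ, -b ≤ i ∧ i ≤ -1 ∧ y ≤ pot ω i) :
    hfun ω (-b) a 0 ≤ (a : ℝ) * Real.exp (-c) := by
  obtain ⟨i₀, hi1, hi2, hi3⟩ := hmax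
  have hZ : Real.exp y ≤ ∑ i ∈ Finset.Icc (-b) (a-1), Real.exp (pot ω i) := by
    calc Real.exp y ≤ Real.exp (pot ω i₀) := Real.exp_le_exp.mpr hi3
    _ ≤ ∑ i ∈ Finset.Icc (-b) (a-1), Real.exp (pot ω i) :=
      Finset.single_le_sum (fun i _ => (Real.exp_pos _).le)
        (Finset.mem_Icc.mpr ⟨hi1, by omega⟩)
  have haR : (0:ℝ) ≤ (a:ℝ) := by exact_mod_cast (by omega : (0:ℤ) ≤ a)
  have hNum : ∑ i ∈ Finset.Icc (0:ℤ) (a-1), Real.exp (pot ω i)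
      ≤ (a:ℝ) * Real.exp (y - c) := by
    have hbd : ∀ i ∈ Finset.Icc (0:ℤ) (a-1), Real.exp (pot ω i) ≤ Real.exp (y-c) :=
      fun i hi => Real.exp_le_exp.mpr
        (hupper i (Finset.mem_Icc.mp hi).1 (Finset.mem_Icc.mp hi).2)
    calc ∑ i ∈ Finset.Icc (0:ℤ) (a-1), Real.exp (pot ω i)
        ≤ (Finset.Icc (0:ℤ) (a-1)).card • Real.exp (y-c) :=
      Finset.sum_le_card_nsmul _ _ _ hbd
    _ = (a:ℝ) * Real.exp (y-c) := by
      rw [Int.card_Icc, nsmul_eq_mul]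
      congr 1
      have : (a - 1 + 1 - 0 : ℤ) = a := by ring
      rw [this]
      exact_mod_cast congrArg (fun t : ℤ => (t : ℝ)) (Int.toNat_of_nonneg (by omega))
  have hea : (0:ℝ) < Real.exp y := Real.exp_pos y
  calc hfun ω (-b) a 0 ≤ ((a:ℝ) * Real.exp (y - c)) / Real.exp y :=
    div_le_div₀ (by positivity) hNum hea hZ
  _ = (a:ℝ) * Real.exp (-c) := by
    rw [Real.exp_sub, Real.exp_neg]
    field_simp

lemma prod_eq_ofReal_wgt (hω : ∀ x : ℤ, 0 < ω x ∧ ω x < 1) (z : ℤ) (N : ℕ)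
    (σ : ℕ → Bool) :
    (∏ i ∈ Finset.range N,
      (if pathF z σ (i + 1) = pathF z σ i + 1 then ENNReal.ofReal (ω (pathF z σ i))
       else if pathF z σ (i + 1) = pathF z σ i - 1
        then ENNReal.ofReal (1 - ω (pathF z σ i)) else 0))
      = ENNReal.ofReal (wgt ω z N σ) := by
  rw [wgt, ENNReal.ofReal_prod_of_nonneg (fun i _ => by
    split
    · exact (hω _).1.le
    · linarith [(hω (pathF z σ i)).2])]
  apply Finset.prod_congr rfl
  intro i _
  rcases hsi : σ i with _ | _
  · have hstep : pathF z σ (i+1) = pathF z σ i - 1 := by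
      rw [pathF_succ, hsi]; simp [step]; ring
    have hne : pathF z σ (i+1) ≠ pathF z σ i + 1 := by rw [hstep]; omega
    rw [if_neg hne, if_pos hstep]
    simp
  · have hstep : pathF z σ (i+1) = pathF z σ i + 1 := by
      rw [pathF_succ, hsi]; simp [step]
    rw [if_pos hstep]
    simp

lemma extF_inj_of_path (N : ℕ) (σ τ : Fin N → Bool)
    (h : ∀ i ≤ N, pathF 0 (extF N σ) i = pathF 0 (extF N τ) i) : σ = τ := by
  have hbit : ∀ i, i < N → extF N σ i = extF N τ i := by
    intro i hi
    have h1 := h i (le_of_lt hi)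
    have h2 := h (i+1) hi
    rw [pathF_succ, pathF_succ, h1] at h2
    have hstep : step (extF N σ i) = step (extF N τ i) := by omega
    rcases hs : extF N σ i <;> rcases ht : extF N τ i <;>
      simp_all [step]
  funext j
  have := hbit j j.isLt
  simpa [extF, j.isLt] using this

end
end Stmt1Aux

/-- If the potential stays below `y - c` on `[0, a-1]` and reaches `y` somewhere in
`[-b, -1]`, then the chain started at `0` hits `-b` before `a` with probability
at most `a · exp (-c)`. -/
theorem stmt1 (ω : ℤ → ℝ) (hω : ∀ x : ℤ, 0 < ω x ∧ ω x < 1)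
    (P : Measure (ℕ → ℤ)) [IsProbabilityMeasure P]
    (hP : ∀ (n : ℕ) (p : ℕ → ℤ), p 0 = 0 →
      P {x | ∀ i ≤ n, x i = p i} =
        ∏ i ∈ Finset.range n,
          (if p (i + 1) = p i + 1 then ENNReal.ofReal (ω (p i))
           else if p (i + 1) = p i - 1 then ENNReal.ofReal (1 - ω (p i)) else 0))
    (a b : ℤ) (ha : 1 ≤ a) (hb : 1 ≤ b) (y c : ℝ) (hy : 0 < y)
    (hupper : ∀ i : ℤ, 0 ≤ i → i ≤ a - 1 → pot ω i ≤ y - c)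
    (hmax : ∃ i : ℤ, -b ≤ i ∧ i ≤ -1 ∧ y ≤ pot ω i) :
    P {x | ∃ n : ℕ, x n = -b ∧ ∀ m ≤ n, x m ≠ a} ≤
      ENNReal.ofReal ((a : ℝ) * Real.exp (-c)) := by
  classical
  have hTU : {x : ℕ → ℤ | ∃ n : ℕ, x n = -b ∧ ∀ m ≤ n, x m ≠ a}
      = ⋃ N : ℕ, {x : ℕ → ℤ | ∃ n ≤ N, x n = -b ∧ ∀ m ≤ n, x m ≠ a} := by
    ext x
    simp only [mem_iUnion, mem_setOf_eq]
    constructor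
    · rintro ⟨n, h1, h2⟩; exact ⟨n, n, le_rfl, h1, h2⟩
    · rintro ⟨N, n, _, h1, h2⟩; exact ⟨n, h1, h2⟩
  rw [hTU]
  have hmono : Monotone
      (fun N : ℕ => {x : ℕ → ℤ | ∃ n ≤ N, x n = -b ∧ ∀ m ≤ n, x m ≠ a}) := by
    rintro N M hNM x ⟨n, hn, h1, h2⟩
    exact ⟨n, hn.trans hNM, h1, h2⟩
  rw [hmono.measure_iUnion]
  apply iSup_le
  intro N
  -- cylinder sets
  set p : (Fin N → Bool) → ℕ → ℤ :=
    fun σ => Stmt1Aux.pathF 0 (Stmt1Aux.extF N σ) with hp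
  set C : (Fin N → Bool) → Set (ℕ → ℤ) :=
    fun σ => {x | ∀ i ≤ N, x i = p σ i} with hC
  have hCmeas : ∀ σ, MeasurableSet (C σ) := by
    intro σ
    have : C σ = ⋂ (i : ℕ) (_ : i ≤ N), (fun x : ℕ → ℤ => x i) ⁻¹' {p σ i} := by
      ext x
      simp [hC, Set.mem_iInter]
    rw [this]
    exact MeasurableSet.iInter fun i => MeasurableSet.iInter fun _ =>
      (measurable_pi_apply i) (measurableSet_singleton _)
  have hPC : ∀ σ, P (C σ)
      = ENNReal.ofReal (Stmt1Aux.wgt ω 0 N (Stmt1Aux.extF N σ)) := by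
    intro σ
    rw [show P (C σ) = P {x | ∀ i ≤ N, x i = p σ i} from rfl,
      hP N (p σ) rfl]
    exact Stmt1Aux.prod_eq_ofReal_wgt hω 0 N (Stmt1Aux.extF N σ)
  have hdisj : Pairwise (Function.onFun Disjoint C) := by
    intro σ τ hne
    rw [Function.onFun, Set.disjoint_left]
    intro x hxσ hxτ
    apply hne
    apply Stmt1Aux.extF_inj_of_path N σ τ
    intro i hi
    exact (hxσ i hi).symm.trans (hxτ i hi)
  have hU : P (⋃ σ, C σ) = 1 := by
    rw [measure_iUnion hdisj hCmeas, tsum_fintype,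
      Finset.sum_congr rfl (fun σ _ => hPC σ),
      ← ENNReal.ofReal_sum_of_nonneg
        (fun σ _ => Stmt1Aux.wgt_nonneg ω hω 0 N (Stmt1Aux.extF N σ)),
      show (∑ σ : Fin N → Bool, Stmt1Aux.wgt ω 0 N (Stmt1Aux.extF N σ))
          = Stmt1Aux.WS ω N 0 from rfl,
      Stmt1Aux.WS_eq_one ω N 0]
    exact ENNReal.ofReal_one
  have hUc : P (⋃ σ, C σ)ᶜ = 0 := by
    rw [measure_compl (MeasurableSet.iUnion hCmeas) (measure_ne_top P _), hU]
    simp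
  have hcover : {x : ℕ → ℤ | ∃ n ≤ N, x n = -b ∧ ∀ m ≤ n, x m ≠ a}
      ⊆ (⋃ σ, C σ)ᶜ ∪
        ⋃ σ, (if Stmt1Aux.Hit (-b) a 0 N (Stmt1Aux.extF N σ) then C σ else ∅) := by
    intro x hx
    by_cases hxU : x ∈ ⋃ σ, C σ
    · right
      obtain ⟨σ, hσ⟩ := mem_iUnion.mp hxU
      refine mem_iUnion.mpr ⟨σ, ?_⟩
      obtain ⟨n, hn, h1, h2⟩ := hx
      have hHit : Stmt1Aux.Hit (-b) a 0 N (Stmt1Aux.extF N σ) := by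
        refine ⟨n, hn, ?_, ?_⟩
        · rw [show Stmt1Aux.pathF 0 (Stmt1Aux.extF N σ) n = p σ n from rfl,
            ← hσ n hn]
          exact h1
        · intro m hm
          rw [show Stmt1Aux.pathF 0 (Stmt1Aux.extF N σ) m = p σ m from rfl,
            ← hσ m (hm.trans hn)]
          exact h2 m hm
      rw [if_pos hHit]
      exact hσ
    · left
      exact hxU
  have hba : (-b : ℤ) < a := by omega
  calc P {x : ℕ → ℤ | ∃ n ≤ N, x n = -b ∧ ∀ m ≤ n, x m ≠ a}
      ≤ P ((⋃ σ, C σ)ᶜ ∪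
        ⋃ σ, (if Stmt1Aux.Hit (-b) a 0 N (Stmt1Aux.extF N σ) then C σ else ∅)) :=
    measure_mono hcover
  _ ≤ P (⋃ σ, C σ)ᶜ +
      P (⋃ σ, (if Stmt1Aux.Hit (-b) a 0 N (Stmt1Aux.extF N σ) then C σ else ∅)) :=
    measure_union_le _ _
  _ = P (⋃ σ, (if Stmt1Aux.Hit (-b) a 0 N (Stmt1Aux.extF N σ) then C σ else ∅)) := by
    rw [hUc, zero_add]
  _ ≤ ∑' σ : Fin N → Bool,
      P (if Stmt1Aux.Hit (-b) a 0 N (Stmt1Aux.extF N σ) then C σ else ∅) :=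
    measure_iUnion_le _
  _ = ∑ σ : Fin N → Bool,
      P (if Stmt1Aux.Hit (-b) a 0 N (Stmt1Aux.extF N σ) then C σ else ∅) :=
    tsum_fintype _
  _ = ENNReal.ofReal (Stmt1Aux.HS ω (-b) a N 0) := by
    rw [Stmt1Aux.HS, ENNReal.ofReal_sum_of_nonneg (fun σ _ => by
      split
      · exact Stmt1Aux.wgt_nonneg ω hω 0 N (Stmt1Aux.extF N σ)
      · exact le_rfl)]
    apply Finset.sum_congr rfl
    intro σ _
    by_cases h : Stmt1Aux.Hit (-b) a 0 N (Stmt1Aux.extF N σ)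
    · rw [if_pos h, if_pos h, hPC σ]
    · rw [if_neg h, if_neg h, measure_empty, ENNReal.ofReal_zero]
  _ ≤ ENNReal.ofReal ((a : ℝ) * Real.exp (-c)) := by
    apply ENNReal.ofReal_le_ofReal
    exact le_trans
      (Stmt1Aux.HS_le_hfun hω hba N 0 (by omega) (by omega))
      (Stmt1Aux.hfun_le hω a b ha hb y c hupper hmax)
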